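/- arXiv:2105.14098 — 3 statements merged into one kernel-verified Lean document; each statement's English description precedes it below -/
import Mathlib

section
/- Let U ⊆ ℝ^d be open, let φ : U → ℝ be twice continuously differentiable, let A_abs, A_geom : U → ℝ be continuously differentiable, and let k, α : U → ℝ with k(x) ≠ 0 on U. Set A = A_abs · A_geom. Assume that on U: (i) the eikonal equation ‖∇φ‖² = k² holds; (ii) ∇A_abs = −(α/k)·A_abs·∇φ; (iii) the imaginary-part equation 2kαA + 2⟨∇A, ∇φ⟩ + A·Δφ = 0 holds; and (iv) A_abs(x) ≠ 0 on U. Then the transport equation div(A_geom²·∇φ) = 0 holds on U. -/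
open scoped RealInnerProductSpace


/-- The Laplacian of a function on Euclidean space: the sum of its second
partial derivatives along the coordinate directions. -/
noncomputable def laplacian {d : ℕ} {F : Type*} [NormedAddCommGroup F] [NormedSpace ℝ F]
    (f : EuclideanSpace ℝ (Fin d) → F) (x : EuclideanSpace ℝ (Fin d)) : F :=
  ∑ i : Fin d,
    fderiv ℝ (fun y => fderiv ℝ f y (EuclideanSpace.single i (1 : ℝ))) x
      (EuclideanSpace.single i (1 : ℝ))

/-- The divergence of a vector field on Euclidean space: the sum of the partial
derivatives of its components along the coordinate directions. -/
noncomputable def diverg {d : ℕ}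
    (F : EuclideanSpace ℝ (Fin d) → EuclideanSpace ℝ (Fin d))
    (x : EuclideanSpace ℝ (Fin d)) : ℝ :=
  ∑ i : Fin d,
    fderiv ℝ (fun y => F y i) x (EuclideanSpace.single i (1 : ℝ))

-- aux lemmas
lemma inner_gradient_eq {d : ℕ} (f : EuclideanSpace ℝ (Fin d) → ℝ)
    (x v : EuclideanSpace ℝ (Fin d)) :
    ⟪gradient f x, v⟫ = fderiv ℝ f x v := by
  simp [gradient, InnerProductSpace.toDual_symm_apply]

lemma gradient_coord {d : ℕ} (f : EuclideanSpace ℝ (Fin d) → ℝ)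
    (x : EuclideanSpace ℝ (Fin d)) (i : Fin d) :
    gradient f x i = fderiv ℝ f x (EuclideanSpace.single i 1) := by
  rw [← inner_gradient_eq, EuclideanSpace.inner_single_right]
  simp

/-- If on an open set `U` the eikonal equation `‖∇φ‖² = k²` holds, the absorption
factor satisfies `∇A_abs = −(α/k)·A_abs·∇φ` and is nonvanishing, and the
imaginary-part equation `2kαA + 2⟨∇A, ∇φ⟩ + AΔφ = 0` holds for `A = A_abs·A_geom`,
then the transport equation `div(A_geom²·∇φ) = 0` holds on `U`. -/
theorem stmt_2 (d : ℕ) (U : Set (EuclideanSpace ℝ (Fin d))) (hU : IsOpen U)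
    (φ Aabs Ageom k α : EuclideanSpace ℝ (Fin d) → ℝ)
    (hφ : ContDiffOn ℝ 2 φ U)
    (hAabs : ContDiffOn ℝ 1 Aabs U) (hAgeom : ContDiffOn ℝ 1 Ageom U)
    (hk : ∀ x ∈ U, k x ≠ 0)
    (heik : ∀ x ∈ U, ‖gradient φ x‖ ^ 2 = k x ^ 2)
    (habs : ∀ x ∈ U, gradient Aabs x = (-(α x / k x) * Aabs x) • gradient φ x)
    (himag : ∀ x ∈ U,
      2 * k x * α x * (Aabs x * Ageom x)
        + 2 * ⟪gradient (fun y => Aabs y * Ageom y) x, gradient φ x⟫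
        + (Aabs x * Ageom x) * laplacian φ x = 0)
    (hne : ∀ x ∈ U, Aabs x ≠ 0) :
    ∀ x ∈ U, diverg (fun y => (Ageom y) ^ 2 • gradient φ y) x = 0 := by
  intro x hx
  have hmem : U ∈ nhds x := hU.mem_nhds hx
  have hA1 : DifferentiableAt ℝ Ageom x := (hAgeom.contDiffAt hmem).differentiableAt one_ne_zero
  have hA0 : DifferentiableAt ℝ Aabs x := (hAabs.contDiffAt hmem).differentiableAt one_ne_zero
  have hφ2 : ContDiffAt ℝ 2 φ x := hφ.contDiffAt hmem
  have hdφ : DifferentiableAt ℝ (fderiv ℝ φ) x :=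
    (hφ2.fderiv_right (n := 2) (m := 1) (by norm_num)).differentiableAt one_ne_zero
  have hGi : ∀ i : Fin d, DifferentiableAt ℝ
      (fun y => fderiv ℝ φ y (EuclideanSpace.single i (1:ℝ))) x :=
    fun i => hdφ.clm_apply (differentiableAt_const _)
  set P : ℝ := ⟪gradient Ageom x, gradient φ x⟫ with hP
  set L : ℝ := laplacian φ x with hL
  -- compute divergence
  have hdiv : diverg (fun y => (Ageom y) ^ 2 • gradient φ y) x
      = Ageom x ^ 2 * L + 2 * Ageom x * P := by
    have hterm : ∀ i : Fin d,
        fderiv ℝ (fun y => ((Ageom y) ^ 2 • gradient φ y) i) x (EuclideanSpace.single i 1)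
        = Ageom x ^ 2 *
            fderiv ℝ (fun y => fderiv ℝ φ y (EuclideanSpace.single i 1)) x
              (EuclideanSpace.single i 1)
          + 2 * Ageom x * (fderiv ℝ Ageom x (EuclideanSpace.single i 1)
              * fderiv ℝ φ x (EuclideanSpace.single i 1)) := by
      intro i
      have hfe : (fun y => ((Ageom y) ^ 2 • gradient φ y) i)
          = fun y => (Ageom y * Ageom y) * fderiv ℝ φ y (EuclideanSpace.single i 1) := by
        funext y
        simp [gradient_coord, PiLp.smul_apply, pow_two, smul_eq_mul]
      rw [hfe, fderiv_fun_mul (c := fun y => Ageom y * Ageom y) (hA1.mul hA1) (hGi i), fderiv_fun_mul hA1 hA1]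
      simp only [ContinuousLinearMap.add_apply, ContinuousLinearMap.smul_apply, smul_eq_mul]
      ring
    simp only [diverg, laplacian, hL]
    rw [Finset.sum_congr rfl (fun i _ => hterm i)]
    rw [Finset.sum_add_distrib, ← Finset.mul_sum, ← Finset.mul_sum]
    congr 1
    have : P = ∑ i : Fin d,
        fderiv ℝ Ageom x (EuclideanSpace.single i 1) * fderiv ℝ φ x (EuclideanSpace.single i 1) := by
      rw [hP, PiLp.inner_apply]
      simp [gradient_coord]
      exact Finset.sum_congr rfl fun _ _ => mul_comm _ _
    rw [this]
  rw [hdiv]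
  -- gradient of the product
  have hgradmul : gradient (fun y => Aabs y * Ageom y) x
      = Aabs x • gradient Ageom x + Ageom x • gradient Aabs x := by
    simp [gradient, fderiv_fun_mul hA0 hA1, map_add, map_smul]
  -- inner product computations
  have habs' : ⟪gradient Aabs x, gradient φ x⟫ = -(α x / k x) * Aabs x * k x ^ 2 := by
    rw [habs x hx, real_inner_smul_left, real_inner_self_eq_norm_sq, heik x hx]
  have hinner : ⟪gradient (fun y => Aabs y * Ageom y) x, gradient φ x⟫
      = Aabs x * P + Ageom x * (-(α x / k x) * Aabs x * k x ^ 2) := by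
    rw [hgradmul, inner_add_left, real_inner_smul_left, real_inner_smul_left, habs', hP]
  have him := himag x hx
  rw [hinner, ← hL] at him
  have hkx := hk x hx
  have hAx := hne x hx
  have hα : -(α x / k x) * Aabs x * k x ^ 2 = -(α x * k x * Aabs x) := by
    field_simp
  rw [hα] at him
  have hkey : 2 * P + Ageom x * L = 0 := by
    have h1 : Aabs x * (2 * P + Ageom x * L) = 0 := by linear_combination him
    rcases mul_eq_zero.mp h1 with h | h
    · exact absurd h hAx
    · exact h
  linear_combination Ageom x * hkey
end

section
/- Let U ⊆ ℝ^d be open, let φ : U → ℝ be twice continuously differentiable, and let k : U → ℝ be continuously differentiable with k(x) > 0 on U. Suppose the eikonal equation ‖∇φ(x)‖² = k(x)² holds on U. Let I ⊆ ℝ be an interval and x : I → U a differentiable curve solving x′(s) = ∇φ(x(s))/k(x(s)) for all s ∈ I. Then the direction vector κ(s) := ∇φ(x(s)) is differentiable and satisfies the ray equations: x′(s) = κ(s)/k(x(s)), κ′(s) = ∇k(x(s)), and ‖κ(s)‖ = k(x(s)) for all s ∈ I. -/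
open scoped RealInnerProductSpace

open InnerProductSpace in
/-- Key pointwise lemma: at any `x ∈ U`, the gradient field `g = ∇φ` is
differentiable with a derivative `D` satisfying `D (g x) = k x • ∇k x`. -/
lemma eikonal_key (d : ℕ) (U : Set (EuclideanSpace ℝ (Fin d))) (hU : IsOpen U)
    (φ k : EuclideanSpace ℝ (Fin d) → ℝ)
    (hφ : ContDiffOn ℝ 2 φ U) (hk : ContDiffOn ℝ 1 k U)
    (heik : ∀ x ∈ U, ‖gradient φ x‖ ^ 2 = k x ^ 2)
    (x : EuclideanSpace ℝ (Fin d)) (hx : x ∈ U) :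
    ∃ D : EuclideanSpace ℝ (Fin d) →L[ℝ] EuclideanSpace ℝ (Fin d),
      HasFDerivAt (fun y => gradient φ y) D x ∧
      D (gradient φ x) = k x • gradient k x := by
  have hxU : U ∈ nhds x := hU.mem_nhds hx
  have hφx : ContDiffAt ℝ 2 φ x := hφ.contDiffAt hxU
  have hkx : ContDiffAt ℝ 1 k x := hk.contDiffAt hxU
  -- differentiability of fderiv φ
  have hf1 : ContDiffAt ℝ 1 (fderiv ℝ φ) x := hφx.fderiv_right (by norm_num)
  have hf1d : DifferentiableAt ℝ (fderiv ℝ φ) x := hf1.differentiableAt one_ne_zero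
  set e : (EuclideanSpace ℝ (Fin d) →L[ℝ] ℝ) →L[ℝ] EuclideanSpace ℝ (Fin d) :=
    ((toDual ℝ (EuclideanSpace ℝ (Fin d))).symm.toContinuousLinearEquiv :
      (EuclideanSpace ℝ (Fin d) →L[ℝ] ℝ) ≃L[ℝ] EuclideanSpace ℝ (Fin d)).toContinuousLinearMap
  set D : EuclideanSpace ℝ (Fin d) →L[ℝ] EuclideanSpace ℝ (Fin d) := e.comp (fderiv ℝ (fderiv ℝ φ) x) with hD
  have he : ∀ y : EuclideanSpace ℝ (Fin d) →L[ℝ] ℝ,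
      e y = (toDual ℝ (EuclideanSpace ℝ (Fin d))).symm y := fun _ => rfl
  have hg : HasFDerivAt (fun y => gradient φ y) D x := by
    have := e.hasFDerivAt.comp x hf1d.hasFDerivAt
    exact this
  refine ⟨D, hg, ?_⟩
  -- inner product formula for D
  have hDin : ∀ v w : EuclideanSpace ℝ (Fin d), ⟪D v, w⟫ = fderiv ℝ (fderiv ℝ φ) x v w := by
    intro v w
    show ⟪e (fderiv ℝ (fderiv ℝ φ) x v), w⟫ = _
    rw [he, toDual_symm_apply]
  have hsymm : ∀ v w : EuclideanSpace ℝ (Fin d), fderiv ℝ (fderiv ℝ φ) x v w = fderiv ℝ (fderiv ℝ φ) x w v :=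
    (hφx.isSymmSndFDerivAt (by norm_num)).eq
  -- gradient of k
  have hkd : DifferentiableAt ℝ k x := hkx.differentiableAt one_ne_zero
  have hkin : ∀ v : EuclideanSpace ℝ (Fin d), fderiv ℝ k x v = ⟪gradient k x, v⟫ := by
    intro v
    rw [show gradient k x = (toDual ℝ (EuclideanSpace ℝ (Fin d))).symm (fderiv ℝ k x) from rfl, toDual_symm_apply]
  -- derivative of inner g g
  have hA : HasFDerivAt (fun y => ⟪gradient φ y, gradient φ y⟫)
      ((fderivInnerCLM ℝ (gradient φ x, gradient φ x)).comp <| D.prod D) x := hg.inner ℝ hg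
  have hB : HasFDerivAt (fun y => k y * k y)
      (k x • fderiv ℝ k x + k x • fderiv ℝ k x) x := hkd.hasFDerivAt.mul hkd.hasFDerivAt
  have hEq : (fun y => ⟪gradient φ y, gradient φ y⟫) =ᶠ[nhds x] (fun y => k y * k y) := by
    filter_upwards [hxU] with y hy
    have h1 := heik y hy
    rw [real_inner_self_eq_norm_sq, h1]
    ring
  have hfd : ((fderivInnerCLM ℝ (gradient φ x, gradient φ x)).comp <| D.prod D)
      = (k x • fderiv ℝ k x + k x • fderiv ℝ k x) := by
    rw [← hA.fderiv, ← hB.fderiv]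
    exact hEq.fderiv_eq
  have key : ∀ v : EuclideanSpace ℝ (Fin d), ⟪D v, gradient φ x⟫ = k x * ⟪gradient k x, v⟫ := by
    intro v
    have := congrFun (congrArg (fun (L : EuclideanSpace ℝ (Fin d) →L[ℝ] ℝ) => (L : EuclideanSpace ℝ (Fin d) → ℝ)) hfd) v
    simp only [ContinuousLinearMap.coe_comp', Function.comp_apply,
      ContinuousLinearMap.prod_apply, fderivInnerCLM_apply, ContinuousLinearMap.add_apply,
      ContinuousLinearMap.coe_smul', Pi.smul_apply, smul_eq_mul] at this
    rw [hkin v] at this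
    linarith [real_inner_comm (gradient φ x) (D v)]
  refine ext_inner_right ℝ ?_
  intro v
  rw [hDin, hsymm, ← hDin, key v, real_inner_smul_left]

/-- Rays, defined as curves everywhere tangent to `∇φ` for a solution `φ` of the
eikonal equation `‖∇φ‖² = k²` on an open set `U` with `k > 0`, satisfy the ray
equations `x′ = κ/k(x)`, `κ′ = ∇k(x)` with `‖κ‖ = k(x)`, where `κ(s) = ∇φ(x(s))`. -/
theorem stmt_4 (d : ℕ) (U : Set (EuclideanSpace ℝ (Fin d))) (hU : IsOpen U)
    (φ k : EuclideanSpace ℝ (Fin d) → ℝ)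
    (hφ : ContDiffOn ℝ 2 φ U) (hk : ContDiffOn ℝ 1 k U)
    (hkpos : ∀ x ∈ U, 0 < k x)
    (heik : ∀ x ∈ U, ‖gradient φ x‖ ^ 2 = k x ^ 2)
    (I : Set ℝ) (hI : I.OrdConnected)
    (γ : ℝ → EuclideanSpace ℝ (Fin d)) (hmem : ∀ s ∈ I, γ s ∈ U)
    (hode : ∀ s ∈ I, HasDerivWithinAt γ ((k (γ s))⁻¹ • gradient φ (γ s)) I s) :
    ∀ s ∈ I,
      HasDerivWithinAt γ ((k (γ s))⁻¹ • gradient φ (γ s)) I s ∧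
      HasDerivWithinAt (fun t => gradient φ (γ t)) (gradient k (γ s)) I s ∧
      ‖gradient φ (γ s)‖ = k (γ s) := by
  intro s hs
  have hxU : γ s ∈ U := hmem s hs
  have hkp : 0 < k (γ s) := hkpos _ hxU
  obtain ⟨D, hg, hDg⟩ := eikonal_key d U hU φ k hφ hk heik (γ s) hxU
  refine ⟨hode s hs, ?_, ?_⟩
  · have hc := hg.comp_hasDerivWithinAt s (hode s hs)
    have : D ((k (γ s))⁻¹ • gradient φ (γ s)) = gradient k (γ s) := by
      rw [map_smul, hDg, smul_smul, inv_mul_cancel₀ hkp.ne', one_smul]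
    rwa [this] at hc
  · have h1 := heik (γ s) hxU
    calc ‖gradient φ (γ s)‖ = Real.sqrt (‖gradient φ (γ s)‖ ^ 2) :=
          (Real.sqrt_sq (norm_nonneg _)).symm
      _ = Real.sqrt (k (γ s) ^ 2) := by rw [h1]
      _ = k (γ s) := Real.sqrt_sq hkp.le
end

section
/- Let k : ℝ^d → ℝ be continuously differentiable, let I ⊆ ℝ be an interval, and let x, κ : I → ℝ^d be differentiable functions satisfying the ray equations x′(s) = κ(s)/k(x(s)) and κ′(s) = ∇k(x(s)) for all s ∈ I, where k(x(s)) ≠ 0 for all s ∈ I. Then the quantity s ↦ ‖κ(s)‖² − k(x(s))² is constant on I. In particular, if ‖κ(s₀)‖ = k(x(s₀)) at some s₀ ∈ I, then ‖κ(s)‖ = |k(x(s))| for all s ∈ I. -/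
open scoped RealInnerProductSpace

/-- For solutions `(x, κ)` of the ray equations `x′ = κ/k(x)`, `κ′ = ∇k(x)` with
`k(x(s)) ≠ 0`, the quantity `‖κ‖² − k(x)²` is a first integral (constant along the
ray); in particular, if `‖κ‖ = k(x)` holds at some point of the interval, then
`‖κ‖ = |k(x)|` holds everywhere on it. -/
theorem stmt_6 (d : ℕ) (k : EuclideanSpace ℝ (Fin d) → ℝ) (hk : ContDiff ℝ 1 k)
    (I : Set ℝ) (hI : I.OrdConnected)
    (γ κ : ℝ → EuclideanSpace ℝ (Fin d))
    (hkne : ∀ s ∈ I, k (γ s) ≠ 0)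
    (hx : ∀ s ∈ I, HasDerivWithinAt γ ((k (γ s))⁻¹ • κ s) I s)
    (hκ : ∀ s ∈ I, HasDerivWithinAt κ (gradient k (γ s)) I s) :
    (∃ C : ℝ, ∀ s ∈ I, ‖κ s‖ ^ 2 - k (γ s) ^ 2 = C) ∧
    (∀ s₀ ∈ I, ‖κ s₀‖ = k (γ s₀) → ∀ s ∈ I, ‖κ s‖ = |k (γ s)|) := by
  set F : ℝ → ℝ := fun s => ‖κ s‖ ^ 2 - k (γ s) ^ 2 with hF
  have hconv : Convex ℝ I := by
    rw [convex_iff_ordConnected]; exact hI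
  have hderiv : ∀ s ∈ I, HasDerivWithinAt F 0 I s := by
    intro s hs
    have hdk : HasDerivWithinAt (fun t => k (γ t))
        (⟪gradient k (γ s), (k (γ s))⁻¹ • κ s⟫) I s := by
      have h1 : HasFDerivAt k (fderiv ℝ k (γ s)) (γ s) :=
        ((hk.differentiable one_ne_zero) (γ s)).hasFDerivAt
      have h2 := h1.comp_hasDerivWithinAt s (hx s hs)
      have h3 : fderiv ℝ k (γ s) ((k (γ s))⁻¹ • κ s)
          = ⟪gradient k (γ s), (k (γ s))⁻¹ • κ s⟫ := by
        have := ((hk.differentiable one_ne_zero) (γ s)).hasGradientAt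
        rw [hasGradientAt_iff_hasFDerivAt] at this
        have h4 : fderiv ℝ k (γ s) = InnerProductSpace.toDual ℝ _ (gradient k (γ s)) :=
          (h1.unique this)
        rw [h4]; rfl
      rw [← h3]; exact h2
    have hn : HasDerivWithinAt (fun t => ‖κ t‖ ^ 2)
        (⟪κ s, gradient k (γ s)⟫ + ⟪gradient k (γ s), κ s⟫) I s := by
      have := (hκ s hs).inner ℝ (hκ s hs)
      simp_rw [real_inner_self_eq_norm_sq] at this
      exact this
    have hsq : HasDerivWithinAt (fun t => k (γ t) ^ 2)
        (2 * k (γ s) * ⟪gradient k (γ s), (k (γ s))⁻¹ • κ s⟫) I s := by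
      simpa [mul_comm] using hdk.fun_pow 2
    have := hn.sub hsq
    have heq : ⟪κ s, gradient k (γ s)⟫ + ⟪gradient k (γ s), κ s⟫
        - 2 * k (γ s) * ⟪gradient k (γ s), (k (γ s))⁻¹ • κ s⟫ = 0 := by
      have hk0 := hkne s hs
      simp only [real_inner_smul_right, real_inner_comm (gradient k (γ s)) (κ s)]
      generalize ⟪κ s, gradient k (γ s)⟫ = a
      field_simp
      ring
    rw [heq] at this
    exact this
  have key : ∀ s ∈ I, ∀ t ∈ I, F s = F t := by
    intro s hs t ht
    have := Convex.norm_image_sub_le_of_norm_hasDerivWithin_le (C := 0)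
      hderiv (fun x hx => by simp) hconv ht hs
    simpa [sub_eq_zero] using this
  constructor
  · rcases Set.eq_empty_or_nonempty I with h | ⟨s₀, hs₀⟩
    · exact ⟨0, fun s hs => by simp [h] at hs⟩
    · exact ⟨F s₀, fun s hs => key s hs s₀ hs₀⟩
  · intro s₀ hs₀ h0 s hs
    have h1 : F s = F s₀ := key s hs s₀ hs₀
    have h2 : F s₀ = 0 := by simp [hF, h0]
    have h3 : ‖κ s‖ ^ 2 = k (γ s) ^ 2 := by
      have := h1.trans h2; simpa [hF, sub_eq_zero] using this
    have h4 := (sq_eq_sq_iff_abs_eq_abs _ _).mp h3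
    simpa [abs_norm] using h4
end
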